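/- arXiv:1203.5253 — 4 statements merged into one kernel-verified Lean document; each statement's English description precedes it below -/
import Mathlib

section
/- Let n ≥ 2 be an integer and 1 ≤ k ≤ n−1 an integer. Let α, β be real with 1 < α < β and suppose (α^k β^{n-k} − 1)/(β^n − 1) < (n-k)/n. Then there exists a unique λ ∈ (1, β) satisfying (n−k)(β/λ)^k + k(λ/β)^{n−k} = n α^k. -/
/-- If `(α^k β^{n-k} − 1)/(β^n − 1) < (n-k)/n`, there is a unique `λ ∈ (1, β)`
with `(n−k)(β/λ)^k + k(λ/β)^{n−k} = n α^k`. -/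
theorem stmt_3 (n k : ℕ) (hn : 2 ≤ n) (hk : 1 ≤ k) (hkn : k ≤ n - 1)
    (α β : ℝ) (hα : 1 < α) (hαβ : α < β)
    (hyp : (α ^ k * β ^ (n - k) - 1) / (β ^ n - 1) < ((n : ℝ) - k) / n) :
    ∃! l : ℝ, l ∈ Set.Ioo (1 : ℝ) β ∧
      ((n : ℝ) - k) * (β / l) ^ k + (k : ℝ) * (l / β) ^ (n - k) = (n : ℝ) * α ^ k := by
  have hkn' : k < n := by omega
  set m := n - k with hmdef
  have hm1 : 1 ≤ m := by omega
  have hkm : k + m = n := by omega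
  have hβ1 : (1:ℝ) < β := hα.trans hαβ
  have hβ0 : (0:ℝ) < β := by linarith
  have hcast : ((n:ℝ) - k) = (m:ℝ) := by
    have : ((k:ℝ)) + (m:ℝ) = (n:ℝ) := by exact_mod_cast congrArg (Nat.cast (R := ℝ)) hkm
    linarith
  set f : ℝ → ℝ := fun l => ((n:ℝ) - k) * (β / l) ^ k + (k:ℝ) * (l / β) ^ m with hfdef
  -- continuity
  have hfc : ContinuousOn f (Set.Icc 1 β) := by
    apply ContinuousOn.add
    · apply ContinuousOn.mul continuousOn_const
      apply ContinuousOn.pow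
      exact continuousOn_const.div continuousOn_id (fun x hx => by
        have := hx.1; intro h; rw [h] at this; linarith)
    · exact continuousOn_const.mul ((continuousOn_id.div_const β).pow m)
  -- derivative
  have hderiv : ∀ l ∈ Set.Ioo (1:ℝ) β, HasDerivAt f
      (((n:ℝ) - k) * (β ^ k * (-(↑k * l ^ (k-1)) / (l ^ k) ^ 2)) +
        (k:ℝ) * ((↑m * l ^ (m-1)) / β ^ m)) l := by
    intro l hl
    have hl0 : (0:ℝ) < l := lt_trans one_pos hl.1
    have hlk : l ^ k ≠ 0 := by positivity
    have h1 : HasDerivAt (fun x : ℝ => (x ^ k)⁻¹) (-(↑k * l ^ (k-1)) / (l ^ k) ^ 2) l :=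
      (hasDerivAt_pow k l).inv hlk
    have h2 : HasDerivAt (fun x : ℝ => x ^ m) (↑m * l ^ (m-1)) l := hasDerivAt_pow m l
    have h3 := ((h1.const_mul (β ^ k)).const_mul ((n:ℝ) - k)).add
      ((h2.div_const (β ^ m)).const_mul (k:ℝ))
    have hfg : f = fun x : ℝ => ((n:ℝ) - k) * (β ^ k * (x ^ k)⁻¹) + (k:ℝ) * (x ^ m / β ^ m) := by
      funext x
      simp only [hfdef, div_eq_mul_inv, mul_pow, inv_pow]
    rw [hfg]
    exact h3
  -- strict antitonicity
  have hanti : StrictAntiOn f (Set.Icc 1 β) := by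
    apply strictAntiOn_of_deriv_neg (convex_Icc 1 β) hfc
    intro l hl
    rw [interior_Icc] at hl
    rw [(hderiv l hl).deriv]
    have hl0 : (0:ℝ) < l := lt_trans one_pos hl.1
    have key : l ^ n < β ^ n := pow_lt_pow_left₀ hl.2 hl0.le (by omega)
    have hβm : (0:ℝ) < β ^ m := pow_pos hβ0 m
    have hlk2 : (0:ℝ) < (l ^ k) ^ 2 := by positivity
    have hrw : ((n:ℝ) - k) * (β ^ k * (-(↑k * l ^ (k-1)) / (l ^ k) ^ 2)) +
        (k:ℝ) * ((↑m * l ^ (m-1)) / β ^ m)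
        = (↑k * ↑m) * (l ^ (m-1) / β ^ m - β ^ k * l ^ (k-1) / (l ^ k) ^ 2) := by
      rw [hcast]; ring
    rw [hrw]
    apply mul_neg_of_pos_of_neg
    · have h1 : (0:ℝ) < (k:ℝ) := by exact_mod_cast hk
      have h2 : (0:ℝ) < (m:ℝ) := by exact_mod_cast hm1
      positivity
    · rw [sub_neg, div_lt_div_iff₀ hβm hlk2]
      calc l ^ (m-1) * (l ^ k) ^ 2 = l ^ n * l ^ (k-1) := by
            rw [← pow_mul, ← pow_add, ← pow_add]; congr 1; omega
        _ < β ^ n * l ^ (k-1) := by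
            apply mul_lt_mul_of_pos_right key (by positivity)
        _ = β ^ k * l ^ (k-1) * β ^ m := by rw [← hkm, pow_add]; ring
  -- value at β
  have hfβ : f β = (n:ℝ) := by
    simp only [hfdef, div_self hβ0.ne', one_pow]
    ring
  -- n < n α^k
  have hα0 : (0:ℝ) < α := by linarith
  have hαk : (1:ℝ) < α ^ k := one_lt_pow₀ hα (by omega)
  have hn0 : (0:ℝ) < (n:ℝ) := by exact_mod_cast (by omega : 0 < n)
  have hβn : (n:ℝ) < (n:ℝ) * α ^ k := by nlinarith
  -- value at 1 exceeds n α^k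
  have hf1 : (n:ℝ) * α ^ k < f 1 := by
    have hβn1 : (0:ℝ) < β ^ n - 1 := by
      have := one_lt_pow₀ hβ1 (by omega : n ≠ 0); linarith
    rw [div_lt_div_iff₀ hβn1 hn0] at hyp
    -- hyp : (α ^ k * β ^ m - 1) * n < ((n:ℝ) - k) * (β ^ n - 1)
    have hβm : (0:ℝ) < β ^ m := pow_pos hβ0 m
    have hpow : β ^ k * β ^ m = β ^ n := by rw [← pow_add, hkm]
    have hkc : (0:ℝ) < (k:ℝ) := by exact_mod_cast hk
    have h2 : (n:ℝ) * α ^ k * β ^ m < ((n:ℝ) - k) * β ^ n + k := by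
      have hkn'' : (k:ℝ) ≤ (n:ℝ) := by exact_mod_cast hkn'.le
      nlinarith
    simp only [hfdef]
    rw [div_one, one_div]
    have expand : (((n:ℝ) - k) * β ^ k + (k:ℝ) * (β⁻¹) ^ m) * β ^ m
        = ((n:ℝ) - k) * β ^ n + k := by
      rw [inv_pow, add_mul, mul_assoc ((n:ℝ) - k), hpow, mul_assoc, inv_mul_cancel₀ hβm.ne',
        mul_one]
    rw [← mul_lt_mul_iff_left₀ hβm, expand]
    linarith
  -- IVT
  have hmem : (n:ℝ) * α ^ k ∈ Set.Icc (f β) (f 1) := ⟨by rw [hfβ]; linarith, hf1.le⟩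
  obtain ⟨l, hlI, hfl⟩ := intermediate_value_Icc' hβ1.le hfc hmem
  have hl1 : 1 < l := by
    rcases lt_or_eq_of_le hlI.1 with h | h
    · exact h
    · exfalso; rw [← h] at hfl; linarith [hfl]
  have hlβ : l < β := by
    rcases lt_or_eq_of_le hlI.2 with h | h
    · exact h
    · exfalso; rw [h] at hfl; rw [hfβ] at hfl; linarith
  refine ⟨l, ⟨⟨hl1, hlβ⟩, hfl⟩, ?_⟩
  rintro l' ⟨hl'I, hfl'⟩
  have h1 : l' ∈ Set.Icc (1:ℝ) β := ⟨hl'I.1.le, hl'I.2.le⟩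
  have h2 : l ∈ Set.Icc (1:ℝ) β := hlI
  exact hanti.injOn h1 h2 (by rw [hfl]; exact hfl')
end

section
/- Let n ≥ 2 and β > α > 1. A twice-differentiable function f on [1,β] that satisfies f'' + (n−1)f'/x − (n−1)f/x² = 0 on the open set {x : f(x) > 1}, equals 1 off this set, has f(1) = 1, f(β) = α, f ≥ 1 and f continuously differentiable, is a critical point of the energy E(f) = (1/2)∫₁^β (x^{n-1} f'² + (n−1)x^{n-3} f²) dx over K = { f ∈ H¹ : f(1)=1, f(β)=α, f ≥ 1 } in the sense that for all h ∈ H¹ with h(1)=h(β)=0 and f + th ∈ K for small t > 0, the one-sided derivative (d/dt)|_{t=0⁺} E(f+th) ≥ 0. -/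
open MeasureTheory Set Filter Topology

/-- The isolated points of any subset of ℝ form a countable set. -/
lemma countable_isolated_aux (s : Set ℝ) :
    {x | x ∈ s ∧ 𝓝[s \ {x}] x = ⊥}.Countable := by
  set bad := {x | x ∈ s ∧ 𝓝[s \ {x}] x = ⊥} with hbad
  have key : ∀ x ∈ bad, ∃ pq : ℚ × ℚ, (pq.1 : ℝ) < x ∧ x < pq.2 ∧
      s ∩ Set.Ioo (pq.1 : ℝ) (pq.2 : ℝ) ⊆ {x} := by
    intro x hx
    obtain ⟨hxs, hbot⟩ := hx
    have hmem : (∅ : Set ℝ) ∈ 𝓝[s \ {x}] x := by rw [hbot]; exact Filter.mem_bot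
    rw [mem_nhdsWithin] at hmem
    obtain ⟨U, hUopen, hxU, hU⟩ := hmem
    obtain ⟨ε, hε, hball⟩ := Metric.isOpen_iff.1 hUopen x hxU
    obtain ⟨p, hp1, hp2⟩ := exists_rat_btwn (show x - ε < x by linarith)
    obtain ⟨q, hq1, hq2⟩ := exists_rat_btwn (show x < x + ε by linarith)
    refine ⟨(p, q), hp2, hq1, ?_⟩
    rintro y ⟨hys, hy⟩
    by_contra hne
    have hyU : y ∈ U := by
      apply hball
      rw [Real.ball_eq_Ioo]
      exact ⟨by linarith [hy.1], by linarith [hy.2]⟩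
    exact hU ⟨hyU, hys, fun hsing => hne (by simpa using hsing)⟩
  choose! F hF1 hF2 hF3 using key
  refine Set.MapsTo.countable_of_injOn (Set.mapsTo_univ F bad) ?_ Set.countable_univ
  intro x hx y hy hxy
  have hyx : y ∈ s ∩ Set.Ioo ((F x).1 : ℝ) ((F x).2 : ℝ) := by
    rw [hxy]
    exact ⟨hy.1, hF1 y hy, hF2 y hy⟩
  simpa using (hF3 x hx hyx).symm

/-- If a differentiable function is constant on a set clustering at `x`, its deriv at `x` is 0. -/
lemma deriv_eq_zero_of_cluster (g : ℝ → ℝ) (s : Set ℝ) (x : ℝ)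
    (hg : DifferentiableAt ℝ g x) (hconst : ∀ y ∈ s, g y = g x)
    (hne : (𝓝[s \ {x}] x).NeBot) : deriv g x = 0 := by
  have hd := hg.hasDerivAt
  rw [hasDerivAt_iff_tendsto_slope] at hd
  have hle : 𝓝[s \ {x}] x ≤ 𝓝[≠] x :=
    nhdsWithin_mono x (fun y hy => by simpa using fun hh => hy.2 (by simpa using hh))
  have h1 : Filter.Tendsto (slope g x) (𝓝[s \ {x}] x) (𝓝 (deriv g x)) := hd.mono_left hle
  have h2 : Filter.Tendsto (slope g x) (𝓝[s \ {x}] x) (𝓝 0) := by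
    apply Filter.Tendsto.congr' _ tendsto_const_nhds
    filter_upwards [self_mem_nhdsWithin] with y hy
    simp [slope_def_field, hconst y hy.1]
  exact tendsto_nhds_unique h1 h2

open MeasureTheory

/-- The energy functional `E(f) = (1/2)∫₁^β (x^{n-1} f'² + (n−1) x^{n-3} f²) dx`. -/
noncomputable def energy (n : ℕ) (β : ℝ) (f : ℝ → ℝ) : ℝ :=
  (1 / 2) * ∫ x in (1 : ℝ)..β,
    (x ^ ((n : ℤ) - 1) * (deriv f x) ^ 2 + ((n : ℝ) - 1) * x ^ ((n : ℤ) - 3) * (f x) ^ 2)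

/-- Membership in the convex set `K = {f ∈ H¹([1,β]) : f(1)=1, f(β)=α, f ≥ 1}`,
with `H¹`-regularity expressed via continuity, differentiability and integrability
of the energy integrand. -/
def memK (n : ℕ) (α β : ℝ) (f : ℝ → ℝ) : Prop :=
  ContinuousOn f (Set.Icc 1 β) ∧ (∀ x ∈ Set.Ioo (1 : ℝ) β, DifferentiableAt ℝ f x) ∧
  IntervalIntegrable
    (fun x => x ^ ((n : ℤ) - 1) * (deriv f x) ^ 2 + ((n : ℝ) - 1) * x ^ ((n : ℤ) - 3) * (f x) ^ 2)
    volume 1 β ∧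
  f 1 = 1 ∧ f β = α ∧ ∀ x ∈ Set.Icc (1 : ℝ) β, 1 ≤ f x

/-- A `C¹` function solving the ODE on `{f > 1}`, equal to `1` elsewhere, with the
right boundary values and `f ≥ 1`, is a critical point of `E` over `K` in the variational
inequality sense: every one-sided derivative at `t = 0⁺` along admissible directions is `≥ 0`. -/
theorem stmt_10 (n : ℕ) (hn : 2 ≤ n) (α β : ℝ) (hβ : α < β) (hα : 1 < α)
    (f : ℝ → ℝ)
    (hf2 : ∀ x ∈ Set.Icc (1 : ℝ) β, DifferentiableAt ℝ f x ∧ DifferentiableAt ℝ (deriv f) x)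
    (hC1 : ContinuousOn (deriv f) (Set.Icc 1 β))
    (hode : ∀ x ∈ Set.Icc (1 : ℝ) β, 1 < f x →
      deriv (deriv f) x + ((n : ℝ) - 1) * deriv f x / x - ((n : ℝ) - 1) * f x / x ^ 2 = 0)
    (hoff : ∀ x ∈ Set.Icc (1 : ℝ) β, ¬ 1 < f x → f x = 1)
    (hK : memK n α β f) :
    ∀ h : ℝ → ℝ, ContinuousOn h (Set.Icc 1 β) →
      (∀ x ∈ Set.Ioo (1 : ℝ) β, DifferentiableAt ℝ h x) →
      h 1 = 0 → h β = 0 →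
      (∃ ε > (0 : ℝ), ∀ t ∈ Set.Ioc (0 : ℝ) ε, memK n α β (fun x => f x + t * h x)) →
      ∀ d : ℝ,
        HasDerivWithinAt (fun t : ℝ => energy n β (fun x => f x + t * h x)) d (Set.Ici 0) 0 →
        0 ≤ d := by
  intro h hhc hhd hh1 hhβ hεex d hd
  obtain ⟨ε, hε, hmem⟩ := hεex
  obtain ⟨hfc, hfd', hAint, hf1, hfβ, hfge⟩ := hK
  have h1β : (1:ℝ) < β := hα.trans hβ
  have h1β' : (1:ℝ) ≤ β := h1β.le
  set A : ℝ → ℝ := fun x =>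
    x ^ ((n : ℤ) - 1) * (deriv f x) ^ 2 + ((n : ℝ) - 1) * x ^ ((n : ℤ) - 3) * (f x) ^ 2 with hA
  set B : ℝ → ℝ := fun x =>
    2 * (x ^ ((n : ℤ) - 1) * deriv f x * deriv h x
      + ((n : ℝ) - 1) * x ^ ((n : ℤ) - 3) * f x * h x) with hB
  set C : ℝ → ℝ := fun x =>
    x ^ ((n : ℤ) - 1) * (deriv h x) ^ 2 + ((n : ℝ) - 1) * x ^ ((n : ℤ) - 3) * (h x) ^ 2 with hC
  -- a.e. membership reduction from Ioc to Ioo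
  have haeIoo : ∀ᵐ x ∂(volume : Measure ℝ), x ∈ Set.Ioc (1:ℝ) β → x ∈ Set.Ioo (1:ℝ) β := by
    have hβ0 : ∀ᵐ x ∂(volume : Measure ℝ), x ≠ β := by
      rw [MeasureTheory.ae_iff]
      simpa using Real.volume_singleton
    filter_upwards [hβ0] with x hx hxIoc
    exact ⟨hxIoc.1, lt_of_le_of_ne hxIoc.2 hx⟩
  -- congruence for interval integrability
  have congr_int : ∀ (F G : ℝ → ℝ), IntervalIntegrable F volume 1 β →
      (∀ᵐ x ∂(volume : Measure ℝ), x ∈ Set.Ioc (1:ℝ) β → F x = G x) →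
      IntervalIntegrable G volume 1 β := by
    intro F G hF hae
    rw [intervalIntegrable_iff_integrableOn_Ioc_of_le h1β'] at hF ⊢
    exact hF.congr ((MeasureTheory.ae_restrict_iff' measurableSet_Ioc).mpr hae)
  -- derivative of the path
  have hderiv_path : ∀ (t : ℝ), ∀ x ∈ Set.Ioo (1:ℝ) β,
      deriv (fun y => f y + t * h y) x = deriv f x + t * deriv h x := by
    intro t x hx
    have hfd := (hf2 x (Set.Ioo_subset_Icc_self hx)).1
    have hhx := hhd x hx
    rw [deriv_fun_add hfd (hhx.const_mul t), deriv_const_mul t hhx]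
  -- the integrand along the path equals A + tB + t²C a.e.
  have haeI : ∀ t : ℝ, ∀ᵐ x ∂(volume : Measure ℝ), x ∈ Set.Ioc (1:ℝ) β →
      x ^ ((n : ℤ) - 1) * (deriv (fun y => f y + t * h y) x) ^ 2
        + ((n : ℝ) - 1) * x ^ ((n : ℤ) - 3) * (f x + t * h x) ^ 2
      = A x + t * B x + t ^ 2 * C x := by
    intro t
    filter_upwards [haeIoo] with x hx hxIoc
    rw [hderiv_path t x (hx hxIoc)]
    simp only [hA, hB, hC]
    ring
  have hP : ∀ t ∈ Set.Ioc (0:ℝ) ε,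
      IntervalIntegrable (fun x => A x + t * B x + t ^ 2 * C x) volume 1 β := by
    intro t ht
    obtain ⟨-, -, hint, -, -, -⟩ := hmem t ht
    exact congr_int _ _ hint (haeI t)
  have hεne : ε ≠ 0 := ne_of_gt hε
  have h1' : IntervalIntegrable (fun x => (ε/2) * B x + (ε/2) ^ 2 * C x) volume 1 β := by
    have h0 := (hP (ε/2) ⟨by linarith, by linarith⟩).sub hAint
    have heq : (fun x => (ε/2) * B x + (ε/2) ^ 2 * C x)
        = fun x => (A x + (ε/2) * B x + (ε/2) ^ 2 * C x) - A x := by funext x; ring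
    rw [heq]; exact h0
  have h2' : IntervalIntegrable (fun x => ε * B x + ε ^ 2 * C x) volume 1 β := by
    have h0 := (hP ε ⟨hε, le_rfl⟩).sub hAint
    have heq : (fun x => ε * B x + ε ^ 2 * C x)
        = fun x => (A x + ε * B x + ε ^ 2 * C x) - A x := by funext x; ring
    rw [heq]; exact h0
  have hCint : IntervalIntegrable C volume 1 β := by
    have h3 := ((h1'.const_mul ε).sub (h2'.const_mul (ε/2))).const_mul (-4/ε^3)
    have heq : C = fun x => (-4/ε^3) *
        (ε * ((ε/2) * B x + (ε/2) ^ 2 * C x) - (ε/2) * (ε * B x + ε ^ 2 * C x)) := by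
      funext x; field_simp; ring
    rw [heq]; exact h3
  have hBint : IntervalIntegrable B volume 1 β := by
    have h3 := (h1'.sub (hCint.const_mul ((ε/2) ^ 2))).const_mul (2/ε)
    have heq : B = fun x => (2/ε) *
        (((ε/2) * B x + (ε/2) ^ 2 * C x) - (ε/2) ^ 2 * C x) := by
      funext x; field_simp; ring
    rw [heq]; exact h3
  set IA := ∫ x in (1:ℝ)..β, A x with hIA
  set IB := ∫ x in (1:ℝ)..β, B x with hIB
  set IC := ∫ x in (1:ℝ)..β, C x with hIC
  -- the energy along the path is an exact quadratic polynomial in t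
  have hgpoly : ∀ t : ℝ, energy n β (fun x => f x + t * h x)
      = (1/2) * (IA + t * IB + t ^ 2 * IC) := by
    intro t
    have hstep : (∫ x in (1:ℝ)..β,
        (x ^ ((n : ℤ) - 1) * (deriv (fun y => f y + t * h y) x) ^ 2
          + ((n : ℝ) - 1) * x ^ ((n : ℤ) - 3) * (f x + t * h x) ^ 2))
        = ∫ x in (1:ℝ)..β, (A x + t * B x + t ^ 2 * C x) := by
      apply intervalIntegral.integral_congr_ae'
      · exact haeI t
      · apply Filter.Eventually.of_forall
        intro x hx
        exact absurd hx.2 (not_le.mpr (lt_of_lt_of_le h1β hx.1.le))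
    simp only [energy]
    rw [hstep, intervalIntegral.integral_add (hAint.add (hBint.const_mul t))
      (hCint.const_mul (t ^ 2)), intervalIntegral.integral_add hAint (hBint.const_mul t),
      intervalIntegral.integral_const_mul t B, intervalIntegral.integral_const_mul (t ^ 2) C,
      hIA, hIB, hIC]
  -- identify d with (1/2) IB
  have hpoly : HasDerivWithinAt (fun t : ℝ => (1/2) * (IA + t * IB + t ^ 2 * IC))
      ((1/2) * IB) (Set.Ici 0) 0 := by
    have ha : HasDerivAt (fun t : ℝ => IA + t * IB) IB 0 := by
      simpa using ((hasDerivAt_id (0:ℝ)).mul_const IB).const_add IA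
    have hb : HasDerivAt (fun t : ℝ => t ^ 2 * IC) (2 * 0 * IC) 0 := by
      simpa using (hasDerivAt_pow 2 (0:ℝ)).mul_const IC
    have h1 := ((ha.add hb).const_mul (1/2)).hasDerivWithinAt (s := Set.Ici (0:ℝ))
    simpa using h1
  have hd' : HasDerivWithinAt (fun t : ℝ => energy n β (fun x => f x + t * h x))
      ((1/2) * IB) (Set.Ici 0) 0 := by
    have hfun : (fun t : ℝ => energy n β (fun x => f x + t * h x))
        = fun t => (1/2) * (IA + t * IB + t ^ 2 * IC) := funext hgpoly
    rw [hfun]; exact hpoly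
  have hdval : d = (1/2) * IB := by
    have hu : UniqueDiffWithinAt ℝ (Set.Ici (0:ℝ)) 0 := uniqueDiffOn_Ici 0 0 Set.self_mem_Ici
    rw [← hd.derivWithin hu, hd'.derivWithin hu]
  rw [hdval]
  -- the contact set
  have hSclosed : IsClosed (Set.Icc (1:ℝ) β ∩ f ⁻¹' {1}) :=
    hfc.preimage_isClosed_of_isClosed isClosed_Icc isClosed_singleton
  set S := Set.Icc (1:ℝ) β ∩ f ⁻¹' {1} with hS
  set w : ℝ → ℝ := S.indicator (fun x => ((n:ℝ) - 1) * x ^ ((n : ℤ) - 3) * h x) with hw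
  have hh0 : ∀ x ∈ S, 0 ≤ h x := by
    intro x hx
    obtain ⟨-, -, -, -, -, hge⟩ := hmem ε ⟨hε, le_rfl⟩
    have h1 := hge x hx.1
    have hfx : f x = 1 := hx.2
    simp only [hfx] at h1
    nlinarith
  have hwpos : ∀ u ∈ Set.Icc (1:ℝ) β, 0 ≤ w u := by
    intro u hu
    by_cases hus : u ∈ S
    · rw [hw, Set.indicator_of_mem hus]
      have hu0 : (0:ℝ) < u ^ ((n:ℤ) - 3) := zpow_pos (lt_of_lt_of_le one_pos hu.1) _
      have hn1 : (1:ℝ) ≤ (n:ℝ) - 1 := by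
        have : (2:ℝ) ≤ (n:ℝ) := by exact_mod_cast hn
        linarith
      have := hh0 u hus
      positivity
    · rw [hw, Set.indicator_of_notMem hus]
  have hzc : ∀ (k : ℤ), ContinuousOn (fun x : ℝ => x ^ k) (Set.Icc (1:ℝ) β) := by
    intro k x hx
    exact (continuousAt_zpow₀ x k (Or.inl (ne_of_gt (lt_of_lt_of_le one_pos hx.1)))).continuousWithinAt
  have hwint : IntervalIntegrable w volume 1 β := by
    rw [intervalIntegrable_iff_integrableOn_Ioc_of_le h1β']
    have hgcont : ContinuousOn (fun x => ((n:ℝ) - 1) * x ^ ((n : ℤ) - 3) * h x)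
        (Set.Icc (1:ℝ) β) := (continuousOn_const.mul (hzc _)).mul hhc
    have hgint : IntegrableOn (fun x => ((n:ℝ) - 1) * x ^ ((n : ℤ) - 3) * h x)
        (Set.Ioc (1:ℝ) β) volume := by
      have hcont' : ContinuousOn (fun x => ((n:ℝ) - 1) * x ^ ((n : ℤ) - 3) * h x)
          (Set.uIcc (1:ℝ) β) := by
        rw [Set.uIcc_of_le h1β']; exact hgcont
      exact (intervalIntegrable_iff_integrableOn_Ioc_of_le h1β').mp hcont'.intervalIntegrable
    exact hgint.indicator hSclosed.measurableSet
  -- vanishing of f' and f'' on the contact set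
  have hf'0 : ∀ x ∈ Set.Ioo (1:ℝ) β, f x = 1 → deriv f x = 0 := by
    intro x hx hfx
    have hmin : IsLocalMin f x := by
      have hmem' : Set.Icc (1:ℝ) β ∈ 𝓝 x := Icc_mem_nhds hx.1 hx.2
      filter_upwards [hmem'] with y hy
      rw [hfx]
      exact hfge y hy
    exact hmin.deriv_eq_zero
  set C' := Set.Ioo (1:ℝ) β ∩ f ⁻¹' {1} with hC'
  set N := {x | x ∈ C' ∧ 𝓝[C' \ {x}] x = ⊥} with hNdef
  have hN : volume N = 0 := (countable_isolated_aux C').measure_zero volume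
  have hf''0 : ∀ x ∈ Set.Ioo (1:ℝ) β, f x = 1 → x ∉ N → deriv (deriv f) x = 0 := by
    intro x hx hfx hxN
    have hxC : x ∈ C' := ⟨hx, hfx⟩
    have hne : (𝓝[C' \ {x}] x).NeBot := ⟨fun hb => hxN ⟨hxC, hb⟩⟩
    apply deriv_eq_zero_of_cluster (deriv f) C' x (hf2 x (Set.Ioo_subset_Icc_self hx)).2 _ hne
    intro y hy
    rw [hf'0 y hy.1 hy.2, hf'0 x hx hfx]
  -- integration by parts potential
  set φ : ℝ → ℝ := fun x => x ^ ((n : ℤ) - 1) * (deriv f x * h x) with hφ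
  set ψ : ℝ → ℝ := fun x => ((((n : ℤ) - 1) : ℤ) : ℝ) * x ^ ((n : ℤ) - 1 - 1) * (deriv f x * h x)
      + x ^ ((n : ℤ) - 1) * (deriv (deriv f) x * h x + deriv f x * deriv h x) with hψ
  have hφderiv : ∀ x ∈ Set.Ioo (1:ℝ) β, HasDerivAt φ (ψ x) x := by
    intro x hx
    have hx0 : x ≠ 0 := ne_of_gt (lt_trans one_pos hx.1)
    have hz := hasDerivAt_zpow ((n:ℤ) - 1) x (Or.inl hx0)
    have hm := ((hf2 x (Set.Ioo_subset_Icc_self hx)).2.hasDerivAt).mul (hhd x hx).hasDerivAt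
    exact hz.mul hm
  have hφc : ContinuousOn φ (Set.Icc (1:ℝ) β) := (hzc _).mul (hC1.mul hhc)
  have haeN : ∀ᵐ x ∂(volume : Measure ℝ), x ∉ N := by
    rw [MeasureTheory.ae_iff]
    simpa using hN
  have hkey : ∀ᵐ x ∂(volume : Measure ℝ), x ∈ Set.Ioc (1:ℝ) β →
      ψ x = (1/2) * B x - w x := by
    filter_upwards [haeIoo, haeN] with x hx1 hx2 hxIoc
    have hx : x ∈ Set.Ioo (1:ℝ) β := hx1 hxIoc
    have hxIcc := Set.Ioo_subset_Icc_self hx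
    have hx0 : (0:ℝ) < x := lt_trans one_pos hx.1
    have hx0' : x ≠ 0 := ne_of_gt hx0
    have hzpow2 : x ^ ((n:ℤ) - 1 - 1) = x ^ ((n:ℤ) - 1) / x := by
      rw [zpow_sub₀ hx0', zpow_one]
    have hzpow3 : x ^ ((n:ℤ) - 3) = x ^ ((n:ℤ) - 1) / x ^ 2 := by
      rw [show (n:ℤ) - 3 = ((n:ℤ) - 1) - 2 by ring, zpow_sub₀ hx0',
        show ((2:ℤ)) = ((2:ℕ):ℤ) by norm_num, zpow_natCast]
    by_cases hfx : 1 < f x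
    · have hxS : x ∉ S := by
        intro hs
        have : f x = 1 := hs.2
        rw [this] at hfx
        exact lt_irrefl 1 hfx
      have hode' := hode x hxIcc hfx
      have hf'' : deriv (deriv f) x
          = ((n:ℝ) - 1) * f x / x ^ 2 - ((n:ℝ) - 1) * deriv f x / x := by
        linarith
      rw [hw, Set.indicator_of_notMem hxS]
      simp only [hψ, hB]
      rw [hf'', hzpow2, hzpow3]
      push_cast
      field_simp
      ring
    · have hfx1 : f x = 1 := hoff x hxIcc hfx
      have hxS : x ∈ S := ⟨hxIcc, by simpa using hfx1⟩
      have hd1 := hf'0 x hx hfx1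
      have hd2 := hf''0 x hx hfx1 hx2
      rw [hw, Set.indicator_of_mem hxS]
      simp only [hψ, hB]
      rw [hd1, hd2, hfx1, hzpow3]
      ring
  have hTint : IntervalIntegrable (fun x => (1/2) * B x - w x) volume 1 β :=
    (hBint.const_mul (1/2)).sub hwint
  have hψint : IntervalIntegrable ψ volume 1 β := by
    apply congr_int _ _ hTint
    filter_upwards [hkey] with x hx hxIoc
    exact (hx hxIoc).symm
  have hFTC : ∫ x in (1:ℝ)..β, ψ x = φ β - φ 1 :=
    intervalIntegral.integral_eq_sub_of_hasDeriv_right_of_le h1β' hφc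
      (fun x hx => (hφderiv x hx).hasDerivWithinAt) hψint
  have hφ1 : φ 1 = 0 := by simp [hφ, hh1]
  have hφβ : φ β = 0 := by simp [hφ, hhβ]
  have hzero : ∫ x in (1:ℝ)..β, ψ x = 0 := by rw [hFTC, hφ1, hφβ, sub_zero]
  have hIψ : ∫ x in (1:ℝ)..β, ψ x = (1/2) * IB - ∫ x in (1:ℝ)..β, w x := by
    have hstep : ∫ x in (1:ℝ)..β, ψ x = ∫ x in (1:ℝ)..β, ((1/2) * B x - w x) := by
      apply intervalIntegral.integral_congr_ae'
      · exact hkey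
      · apply Filter.Eventually.of_forall
        intro x hx
        exact absurd hx.2 (not_le.mpr (lt_of_lt_of_le h1β hx.1.le))
    rw [hstep, intervalIntegral.integral_sub (hBint.const_mul (1/2)) hwint,
      intervalIntegral.integral_const_mul, ← hIB]
  have hwi : 0 ≤ ∫ x in (1:ℝ)..β, w x := intervalIntegral.integral_nonneg h1β' hwpos
  linarith [hzero, hIψ, hwi]
end

section
/- Let m, n ≥ 0, 1 ≤ k ≤ n be integers and b, b' > 0 real. Suppose f : [0, b'] → ℝ is a differentiable function with f(0)=0, f(b')=b, f ≥ 0, f' ≥ 0, satisfying G^{m,n,k}_1(f(x), x) = α G^{m,n}_1(x) for all x, where α = G^{m,n,k}_1(b, b')/G^{m,n}_1(b'). If at some interior point x₀ ∈ (0, b') one has f'(x₀) = 0 and f(x₀) > 0, then f''(x₀) > 0 (assuming f is twice differentiable at x₀). Consequently the zeros of f' in (0,b') are isolated and f is strictly increasing on [0, b']. -/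
/-- `G^{m,n}_a(x) = ∫₀^x s^m (s+a)^n ds`. -/
noncomputable def Gmn (m n : ℕ) (a x : ℝ) : ℝ :=
  ∫ s in (0 : ℝ)..x, s ^ m * (s + a) ^ n

/-- `G^{m,n,k}_1(f,x) = (1/k!) (d^k/dt^k)|_{t=0} G^{m,n}_{1+t}(x + t f)`. -/
noncomputable def Gmnk (m n k : ℕ) (f x : ℝ) : ℝ :=
  (1 / (Nat.factorial k : ℝ)) * iteratedDeriv k (fun t : ℝ => Gmn m n (1 + t) (x + t * f)) 0

/-! ### Auxiliary material -/

lemma Gmn_eq (m n : ℕ) (a x : ℝ) :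
    Gmn m n a x = ∑ j ∈ Finset.range (n+1),
      (n.choose j : ℝ) * a ^ (n - j) * x ^ (m + j + 1) / ((m + j + 1 : ℕ) : ℝ) := by
  have key : ∀ u : ℝ, HasDerivAt (fun y : ℝ => ∑ j ∈ Finset.range (n+1),
      (n.choose j : ℝ) * a ^ (n - j) * y ^ (m + j + 1) / ((m + j + 1 : ℕ) : ℝ))
      (u ^ m * (u + a) ^ n) u := by
    intro u
    have h1 : ((u:ℝ) + a) ^ n = ∑ j ∈ Finset.range (n+1),
        u ^ j * a ^ (n - j) * (n.choose j : ℝ) := add_pow u a n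
    have h2 : u ^ m * (u + a) ^ n = ∑ j ∈ Finset.range (n+1),
        (n.choose j : ℝ) * a ^ (n - j) * (((m + j + 1 : ℕ) : ℝ) * u ^ (m + j)) / ((m + j + 1 : ℕ) : ℝ) := by
      rw [h1, Finset.mul_sum]
      refine Finset.sum_congr rfl fun j _ => ?_
      have hne : ((m + j + 1 : ℕ) : ℝ) ≠ 0 := by positivity
      field_simp
      ring
    rw [h2]
    apply HasDerivAt.fun_sum
    intro j _
    have : HasDerivAt (fun y : ℝ => y ^ (m + j + 1))
        (((m + j + 1 : ℕ) : ℝ) * u ^ (m + j)) u := by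
      simpa using hasDerivAt_pow (m + j + 1) u
    exact ((this.const_mul ((n.choose j : ℝ) * a ^ (n - j))).div_const _)
  have hcont : Continuous (fun s : ℝ => s ^ m * (s + a) ^ n) := by continuity
  have := intervalIntegral.integral_eq_sub_of_hasDerivAt
    (f := fun y : ℝ => ∑ j ∈ Finset.range (n+1),
      (n.choose j : ℝ) * a ^ (n - j) * y ^ (m + j + 1) / ((m + j + 1 : ℕ) : ℝ))
    (fun u _ => key u) (hcont.intervalIntegrable 0 x)
  rw [Gmn, this]
  simp

/-- polynomial in `t` whose evaluation is `Gmn m n (1+t) (x + t*c)`. -/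
noncomputable def Pp (m n : ℕ) (c x : ℝ) : Polynomial ℝ :=
  ∑ j ∈ Finset.range (n+1), ∑ l ∈ Finset.range (n-j+1), ∑ p ∈ Finset.range (m+j+2),
    Polynomial.C ((n.choose j : ℝ) * ((n-j).choose l : ℝ) * ((m+j+1).choose p : ℝ) *
      x ^ (m+j+1-p) * c ^ p / ((m+j+1 : ℕ) : ℝ)) * Polynomial.X ^ (l + p)

lemma Pp_eval (m n : ℕ) (c x t : ℝ) :
    (Pp m n c x).eval t = Gmn m n (1+t) (x + t * c) := by
  rw [Gmn_eq]
  simp only [Pp, Polynomial.eval_finset_sum, Polynomial.eval_mul, Polynomial.eval_C,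
    Polynomial.eval_pow, Polynomial.eval_X]
  refine Finset.sum_congr rfl fun j hj => ?_
  have h1 : ((1:ℝ)+t)^(n-j) = ∑ l ∈ Finset.range (n-j+1), ((n-j).choose l : ℝ) * t ^ l := by
    rw [add_comm, add_pow]
    exact Finset.sum_congr rfl fun l _ => by ring
  have h2 : (x + t * c)^(m+j+1) = ∑ p ∈ Finset.range (m+j+2),
      ((m+j+1).choose p : ℝ) * x ^ (m+j+1-p) * (t * c) ^ p := by
    rw [add_comm x, add_pow]
    exact Finset.sum_congr rfl fun p _ => by ring
  rw [h1, h2]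
  simp only [Finset.mul_sum, Finset.sum_mul, Finset.sum_div]
  rw [Finset.sum_comm]
  refine Finset.sum_congr rfl fun l _ => Finset.sum_congr rfl fun p _ => by ring

lemma Pp_coeff (m n : ℕ) (c x : ℝ) (i : ℕ) :
    (Pp m n c x).coeff i = ∑ j ∈ Finset.range (n+1), ∑ l ∈ Finset.range (n-j+1),
      ∑ p ∈ Finset.range (m+j+2),
      (if i = l + p then (n.choose j : ℝ) * ((n-j).choose l : ℝ) * ((m+j+1).choose p : ℝ) *
        x ^ (m+j+1-p) * c ^ p / ((m+j+1 : ℕ) : ℝ) else 0) := by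
  simp only [Pp, Polynomial.finset_sum_coeff, Polynomial.coeff_C_mul, Polynomial.coeff_X_pow,
    mul_ite, mul_one, mul_zero]

lemma Pp_natDegree_le (m n : ℕ) (c x : ℝ) : (Pp m n c x).natDegree ≤ m + n + 1 := by
  refine Polynomial.natDegree_sum_le_of_forall_le _ _ fun j hj => ?_
  refine Polynomial.natDegree_sum_le_of_forall_le _ _ fun l hl => ?_
  refine Polynomial.natDegree_sum_le_of_forall_le _ _ fun p hp => ?_
  refine le_trans (Polynomial.natDegree_C_mul_X_pow_le _ _) ?_
  simp only [Finset.mem_range] at hj hl hp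
  omega

lemma iteratedDeriv_polyeval (p : Polynomial ℝ) (k : ℕ) (t : ℝ) :
    iteratedDeriv k (fun s => p.eval s) t = (Polynomial.derivative^[k] p).eval t := by
  induction k generalizing p with
  | zero => simp
  | succ k ih =>
    rw [iteratedDeriv_succ']
    have : deriv (fun s => p.eval s) = fun s => (Polynomial.derivative p).eval s := by
      funext s; exact Polynomial.deriv p
    rw [this, ih, Function.iterate_succ_apply]

lemma Gmnk_eq_coeff (m n k : ℕ) (c x : ℝ) :
    Gmnk m n k c x = (Pp m n c x).coeff k := by
  have h : (fun t : ℝ => Gmn m n (1 + t) (x + t * c)) = fun t => (Pp m n c x).eval t := by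
    funext t; rw [Pp_eval]
  rw [Gmnk, h, iteratedDeriv_polyeval, ← Polynomial.coeff_zero_eq_eval_zero,
    Polynomial.coeff_iterate_derivative]
  simp only [zero_add, Nat.descFactorial_self, nsmul_eq_mul]
  field_simp

noncomputable def Sp (m n : ℕ) (c c' x : ℝ) : Polynomial ℝ :=
  (Polynomial.C 1 + Polynomial.C c' * Polynomial.X) *
  (Polynomial.C x + Polynomial.C c * Polynomial.X) ^ m *
  (Polynomial.C (1+x) + Polynomial.C (1+c) * Polynomial.X) ^ n

lemma hasDerivAt_Gmn (m n : ℕ) (a u : ℝ) :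
    HasDerivAt (fun y => Gmn m n a y) (u ^ m * (u + a) ^ n) u := by
  have hfun : (fun y => Gmn m n a y) = fun y => ∑ j ∈ Finset.range (n+1),
      (n.choose j : ℝ) * a ^ (n - j) * y ^ (m + j + 1) / ((m + j + 1 : ℕ) : ℝ) := by
    funext y; exact Gmn_eq m n a y
  rw [hfun]
  have h1 : ((u:ℝ) + a) ^ n = ∑ j ∈ Finset.range (n+1),
      u ^ j * a ^ (n - j) * (n.choose j : ℝ) := add_pow u a n
  have h2 : u ^ m * (u + a) ^ n = ∑ j ∈ Finset.range (n+1),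
      (n.choose j : ℝ) * a ^ (n - j) * (((m + j + 1 : ℕ) : ℝ) * u ^ (m + j)) / ((m + j + 1 : ℕ) : ℝ) := by
    rw [h1, Finset.mul_sum]
    refine Finset.sum_congr rfl fun j _ => ?_
    have hne : ((m + j + 1 : ℕ) : ℝ) ≠ 0 := by positivity
    field_simp
    ring
  rw [h2]
  apply HasDerivAt.fun_sum
  intro j _
  have : HasDerivAt (fun y : ℝ => y ^ (m + j + 1))
      (((m + j + 1 : ℕ) : ℝ) * u ^ (m + j)) u := by
    simpa using hasDerivAt_pow (m + j + 1) u
  exact ((this.const_mul ((n.choose j : ℝ) * a ^ (n - j))).div_const _)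

lemma evalP_hasDeriv (m n : ℕ) (f : ℝ → ℝ) (x : ℝ) (hf : DifferentiableAt ℝ f x) (t : ℝ) :
    HasDerivAt (fun y => (Pp m n (f y) y).eval t)
      ((Sp m n (f x) (deriv f x) x).eval t) x := by
  have hfun : (fun y => (Pp m n (f y) y).eval t)
      = fun y => Gmn m n (1+t) (y + t * f y) := by
    funext y; exact Pp_eval m n (f y) y t
  rw [hfun]
  have hg : HasDerivAt (fun y => y + t * f y) (1 + t * deriv f x) x :=
    (hasDerivAt_id x).add ((hf.hasDerivAt.const_mul t))
  have hG := (hasDerivAt_Gmn m n (1+t) (x + t * f x)).comp x hg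
  refine hG.congr_deriv ?_
  · simp [Sp]
    ring

lemma coeffP_diff (m n : ℕ) (f : ℝ → ℝ) (hfd : Differentiable ℝ f) (i : ℕ) :
    Differentiable ℝ (fun x => (Pp m n (f x) x).coeff i) := by
  have h : (fun x => (Pp m n (f x) x).coeff i) = fun x =>
      ∑ j ∈ Finset.range (n+1), ∑ l ∈ Finset.range (n-j+1), ∑ p ∈ Finset.range (m+j+2),
      (if i = l + p then (n.choose j : ℝ) * ((n-j).choose l : ℝ) * ((m+j+1).choose p : ℝ) *
        x ^ (m+j+1-p) * (f x) ^ p / ((m+j+1 : ℕ) : ℝ) else 0) := by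
    funext x; exact Pp_coeff m n (f x) x i
  rw [h]
  refine Differentiable.fun_sum fun j _ => Differentiable.fun_sum fun l _ => Differentiable.fun_sum fun p _ => ?_
  split_ifs
  · exact ((((differentiable_const _).mul (differentiable_pow _)).mul (hfd.pow p)).div_const _)
  · exact differentiable_const 0

lemma coeffP_hasDeriv (m n : ℕ) (f : ℝ → ℝ) (hfd : Differentiable ℝ f) (x : ℝ) (i : ℕ)
    (hi : i < m + n + 2) :
    HasDerivAt (fun y => (Pp m n (f y) y).coeff i)
      ((Sp m n (f x) (deriv f x) x).coeff i) x := by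
  set N := m + n + 2 with hN
  set d : ℕ → ℝ := fun i => deriv (fun y => (Pp m n (f y) y).coeff i) x with hdd
  have hd : ∀ i, HasDerivAt (fun y => (Pp m n (f y) y).coeff i) (d i) x :=
    fun i => ((coeffP_diff m n f hfd i) x).hasDerivAt
  have key : ∀ t : ℝ, (∑ i ∈ Finset.range N, d i * t ^ i)
      = (Sp m n (f x) (deriv f x) x).eval t := by
    intro t
    have heval : (fun y => (Pp m n (f y) y).eval t)
        = fun y => ∑ i ∈ Finset.range N, (Pp m n (f y) y).coeff i * t ^ i := by
      funext y
      exact Polynomial.eval_eq_sum_range' (lt_of_le_of_lt (Pp_natDegree_le m n (f y) y) (by omega)) t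
    have h1 : HasDerivAt (fun y => (Pp m n (f y) y).eval t)
        (∑ i ∈ Finset.range N, d i * t ^ i) x := by
      rw [heval]
      exact HasDerivAt.fun_sum fun i _ => (hd i).mul_const (t ^ i)
    exact h1.unique (evalP_hasDeriv m n f x (hfd x) t)
  have hq : (∑ i ∈ Finset.range N, Polynomial.C (d i) * Polynomial.X ^ i)
      = Sp m n (f x) (deriv f x) x := by
    apply Polynomial.funext
    intro t
    simp only [Polynomial.eval_finset_sum, Polynomial.eval_mul, Polynomial.eval_C,
      Polynomial.eval_pow, Polynomial.eval_X]
    exact key t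
  have hdi : d i = (Sp m n (f x) (deriv f x) x).coeff i := by
    rw [← hq]
    simp only [Polynomial.finset_sum_coeff, Polynomial.coeff_C_mul, Polynomial.coeff_X_pow,
      mul_ite, mul_one, mul_zero]
    rw [Finset.sum_ite_eq (Finset.range N) i d, if_pos (Finset.mem_range.mpr hi)]
  rw [← hdi]
  exact hd i

noncomputable def bet (m n i : ℕ) (u v : ℝ) : ℝ :=
  ∑ p ∈ Finset.range (i+1), (m.choose p : ℝ) * (n.choose (i-p) : ℝ) * u ^ p * v ^ (i-p)

lemma coeff_linpow (u : ℝ) (m i : ℕ) :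
    ((1 + Polynomial.C u * Polynomial.X : Polynomial ℝ) ^ m).coeff i = (m.choose i : ℝ) * u ^ i := by
  have h : ((1 : Polynomial ℝ) + Polynomial.C u * Polynomial.X) ^ m
      = ∑ p ∈ Finset.range (m+1), Polynomial.C ((m.choose p : ℝ) * u ^ p) * Polynomial.X ^ p := by
    rw [add_comm, add_pow]
    refine Finset.sum_congr rfl fun p _ => ?_
    rw [mul_pow, one_pow, mul_one, ← Polynomial.C_pow, map_mul, Polynomial.C_eq_natCast]
    ring
  rw [h]
  simp only [Polynomial.finset_sum_coeff, Polynomial.coeff_C_mul, Polynomial.coeff_X_pow,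
    mul_ite, mul_one, mul_zero]
  rw [Finset.sum_ite_eq (Finset.range (m+1)) i fun p => (m.choose p : ℝ) * u ^ p]
  split_ifs with hmem
  · rfl
  · have him : m + 1 ≤ i := by simpa [Finset.mem_range, not_lt] using hmem
    rw [Nat.choose_eq_zero_of_lt (by omega)]
    simp

lemma coeff_BC (m n : ℕ) (u v : ℝ) (i : ℕ) :
    (((1 + Polynomial.C u * Polynomial.X) ^ m * (1 + Polynomial.C v * Polynomial.X) ^ n
      : Polynomial ℝ)).coeff i = bet m n i u v := by
  rw [Polynomial.coeff_mul, Finset.Nat.sum_antidiagonal_eq_sum_range_succ_mk]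
  unfold bet
  refine Finset.sum_congr rfl fun p _ => ?_
  rw [coeff_linpow, coeff_linpow]
  ring

lemma Sp_coeff (m n k' : ℕ) (c c' x : ℝ) (hx : x ≠ 0) (hx1 : 1 + x ≠ 0) :
    (Sp m n c c' x).coeff (k'+1) = x^m * (1+x)^n *
      (bet m n (k'+1) (c/x) ((1+c)/(1+x)) + c' * bet m n k' (c/x) ((1+c)/(1+x))) := by
  have hxc : x * (c / x) = c := by field_simp
  have hx1c : (1+x) * ((1+c)/(1+x)) = 1+c := by field_simp
  have hA : (Polynomial.C x + Polynomial.C c * Polynomial.X : Polynomial ℝ)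
      = Polynomial.C x * (1 + Polynomial.C (c/x) * Polynomial.X) := by
    rw [mul_add, mul_one, ← mul_assoc, ← Polynomial.C_mul, hxc]
  have hB : (Polynomial.C (1+x) + Polynomial.C (1+c) * Polynomial.X : Polynomial ℝ)
      = Polynomial.C (1+x) * (1 + Polynomial.C ((1+c)/(1+x)) * Polynomial.X) := by
    rw [mul_add, mul_one, ← mul_assoc, ← Polynomial.C_mul, hx1c]
  have hS : Sp m n c c' x = Polynomial.C (x^m * (1+x)^n) *
      ((1 + Polynomial.C (c/x) * Polynomial.X)^m
          * (1 + Polynomial.C ((1+c)/(1+x)) * Polynomial.X)^n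
        + Polynomial.C c' * (Polynomial.X * ((1 + Polynomial.C (c/x) * Polynomial.X)^m
          * (1 + Polynomial.C ((1+c)/(1+x)) * Polynomial.X)^n))) := by
    rw [Sp, hA, hB]
    simp only [mul_pow, ← Polynomial.C_pow, map_mul, map_one]
    ring
  rw [hS, Polynomial.coeff_C_mul, Polynomial.coeff_add, Polynomial.coeff_C_mul,
    Polynomial.coeff_X_mul, coeff_BC, coeff_BC]

lemma bet_pos (m n i : ℕ) (hin : i ≤ n) {u v : ℝ} (hu : 0 ≤ u) (hv : 0 < v) :
    0 < bet m n i u v := by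
  rw [bet]
  have h0 : (0:ℝ) = ∑ p ∈ Finset.range (i+1), (0:ℝ) := by simp
  rw [h0]
  refine Finset.sum_lt_sum (fun p _ => by positivity) ⟨0, Finset.mem_range.mpr (by omega), ?_⟩
  have : 0 < (n.choose i : ℝ) := by exact_mod_cast Nat.choose_pos hin
  simp only [pow_zero, Nat.choose_zero_right, Nat.cast_one, one_mul, mul_one, Nat.sub_zero]
  positivity

lemma bet_deriv_neg (m n i : ℕ) (hi : 1 ≤ i) (hin : i ≤ n) {u v U' V' : ℝ}
    (hu : 0 < u) (hv : 0 < v) (hU' : U' < 0) (hV' : V' < 0) :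
    (∑ p ∈ Finset.range (i+1),
      ((m.choose p : ℝ) * (n.choose (i-p) : ℝ) * ((p : ℝ) * u ^ (p-1) * U') * v ^ (i-p)
        + (m.choose p : ℝ) * (n.choose (i-p) : ℝ) * u ^ p * (((i-p : ℕ) : ℝ) * v ^ (i-p-1) * V'))) < 0 := by
  have h0 : (0:ℝ) = ∑ p ∈ Finset.range (i+1), (0:ℝ) := by simp
  calc _ < ∑ p ∈ Finset.range (i+1), (0:ℝ) := ?_
    _ = 0 := by simp
  refine Finset.sum_lt_sum (fun p _ => ?_) ⟨0, Finset.mem_range.mpr (by omega), ?_⟩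
  · have h1 : (m.choose p : ℝ) * (n.choose (i-p) : ℝ) * ((p : ℝ) * u ^ (p-1) * U') * v ^ (i-p)
        = ((m.choose p : ℝ) * (n.choose (i-p) : ℝ) * (p : ℝ) * u ^ (p-1) * v ^ (i-p)) * U' := by
      ring
    have h2 : (m.choose p : ℝ) * (n.choose (i-p) : ℝ) * u ^ p * (((i-p : ℕ) : ℝ) * v ^ (i-p-1) * V')
        = ((m.choose p : ℝ) * (n.choose (i-p) : ℝ) * u ^ p * ((i-p : ℕ) : ℝ) * v ^ (i-p-1)) * V' := by
      ring
    rw [h1, h2]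
    have := mul_nonpos_of_nonneg_of_nonpos
      (show (0:ℝ) ≤ (m.choose p : ℝ) * (n.choose (i-p) : ℝ) * (p : ℝ) * u ^ (p-1) * v ^ (i-p) by positivity) hU'.le
    have := mul_nonpos_of_nonneg_of_nonpos
      (show (0:ℝ) ≤ (m.choose p : ℝ) * (n.choose (i-p) : ℝ) * u ^ p * ((i-p : ℕ) : ℝ) * v ^ (i-p-1) by positivity) hV'.le
    linarith
  · simp only [Nat.cast_zero, Nat.choose_zero_right, Nat.cast_one, one_mul, zero_mul, mul_zero,
      pow_zero, mul_one, Nat.sub_zero, zero_add]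
    have hc : 0 < (n.choose i : ℝ) := by exact_mod_cast Nat.choose_pos hin
    have hic : 0 < (i : ℝ) := by exact_mod_cast hi
    have : (n.choose i : ℝ) * ((i:ℝ) * v ^ (i-1) * V')
        = ((n.choose i : ℝ) * (i:ℝ) * v ^ (i-1)) * V' := by ring
    rw [this]
    exact mul_neg_of_pos_of_neg (by positivity) hV'

lemma bet_hasDeriv (m n i : ℕ) {u v : ℝ → ℝ} {x U' V' : ℝ}
    (hu : HasDerivAt u U' x) (hv : HasDerivAt v V' x) :
    HasDerivAt (fun y => bet m n i (u y) (v y))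
      (∑ p ∈ Finset.range (i+1),
        ((m.choose p : ℝ) * (n.choose (i-p) : ℝ) * ((p : ℝ) * u x ^ (p-1) * U') * v x ^ (i-p)
          + (m.choose p : ℝ) * (n.choose (i-p) : ℝ) * u x ^ p * (((i-p : ℕ) : ℝ) * v x ^ (i-p-1) * V'))) x := by
  unfold bet
  apply HasDerivAt.fun_sum
  intro p _
  have h := (((hu.fun_pow p).const_mul ((m.choose p : ℝ) * (n.choose (i-p) : ℝ))).fun_mul (hv.fun_pow (i-p)))
  convert h using 1

lemma bet_hasDeriv' (m n i : ℕ) {u v : ℝ → ℝ} {x U' V' : ℝ}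
    (hu : HasDerivAt u U' x) (hv : HasDerivAt v V' x) :
    ∃ D : ℝ, HasDerivAt (fun y => bet m n i (u y) (v y)) D x ∧
      (1 ≤ i → i ≤ n → 0 < u x → 0 < v x → U' < 0 → V' < 0 → D < 0) :=
  ⟨_, bet_hasDeriv m n i hu hv,
    fun h1 h2 h3 h4 h5 h6 => bet_deriv_neg m n i h1 h2 h3 h4 h5 h6⟩

lemma bet_zero_left (m n i : ℕ) (v : ℝ) : bet m n i 0 v = (n.choose i : ℝ) * v ^ i := by
  rw [bet, Finset.sum_eq_single 0]
  · simp
  · intro p _ hp0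
    simp [zero_pow hp0]
  · simp

/-- for a monotone nonnegative solution of `G^{m,n,k}_1(f(x),x) = α G^{m,n}_1(x)`
with the given boundary data, at any interior point where `f' = 0` and `f > 0` one has
`f'' > 0`; consequently `f` is strictly increasing on `[0, b']`. -/
theorem stmt_14 (m n k : ℕ) (hk : 1 ≤ k) (hkn : k ≤ n) (b b' : ℝ) (hb : 0 < b) (hb' : 0 < b')
    (f : ℝ → ℝ) (hfd : Differentiable ℝ f)
    (hf2 : ∀ x ∈ Set.Ioo (0 : ℝ) b', DifferentiableAt ℝ (deriv f) x)
    (hf0 : f 0 = 0) (hfb : f b' = b)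
    (hfpos : ∀ x ∈ Set.Icc (0 : ℝ) b', 0 ≤ f x)
    (hfmono : ∀ x ∈ Set.Icc (0 : ℝ) b', 0 ≤ deriv f x)
    (α : ℝ) (hα : α = Gmnk m n k b b' / Gmn m n 1 b')
    (heq : ∀ x ∈ Set.Icc (0 : ℝ) b', Gmnk m n k (f x) x = α * Gmn m n 1 x) :
    (∀ x₀ ∈ Set.Ioo (0 : ℝ) b', deriv f x₀ = 0 → 0 < f x₀ → 0 < deriv (deriv f) x₀) ∧
    StrictMonoOn f (Set.Icc 0 b') := by
  obtain ⟨k', rfl⟩ : ∃ k', k = k' + 1 := ⟨k - 1, by omega⟩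
  have hcoeff : ∀ y ∈ Set.Icc (0:ℝ) b', (Pp m n (f y) y).coeff (k'+1) = α * Gmn m n 1 y := by
    intro y hy
    rw [← Gmnk_eq_coeff]
    exact heq y hy
  have hSp : ∀ y ∈ Set.Ioo (0:ℝ) b',
      (Sp m n (f y) (deriv f y) y).coeff (k'+1) = α * (y ^ m * (y + 1) ^ n) := by
    intro y hy
    have h1 := coeffP_hasDeriv m n f hfd y (k'+1) (by omega)
    have h2 : HasDerivAt (fun z => α * Gmn m n 1 z) (α * (y ^ m * (y + 1) ^ n)) y :=
      (hasDerivAt_Gmn m n 1 y).const_mul α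
    have hev : (fun z => (Pp m n (f z) z).coeff (k'+1)) =ᶠ[nhds y] fun z => α * Gmn m n 1 z :=
      Filter.eventuallyEq_of_mem (isOpen_Ioo.mem_nhds hy)
        (fun z hz => hcoeff z (Set.mem_Icc_of_Ioo hz))
    have h3 := hev.deriv_eq
    rw [h1.deriv, h2.deriv] at h3
    exact h3
  have hw : ∀ y ∈ Set.Ioo (0:ℝ) b',
      bet m n (k'+1) (f y / y) ((1 + f y)/(1 + y))
        + deriv f y * bet m n k' (f y / y) ((1 + f y)/(1 + y)) = α := by
    intro y hy
    have hy0 : (0:ℝ) < y := hy.1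
    have h3 := Sp_coeff m n k' (f y) (deriv f y) y (ne_of_gt hy0) (by linarith)
    have hc : y ^ m * (1+y) ^ n * (bet m n (k'+1) (f y / y) ((1 + f y)/(1 + y))
        + deriv f y * bet m n k' (f y / y) ((1 + f y)/(1 + y)))
        = y ^ m * (1+y) ^ n * α := by
      rw [← h3, hSp y hy]; ring
    exact mul_left_cancel₀ (by positivity) hc
  have partA : ∀ x₀ ∈ Set.Ioo (0:ℝ) b', deriv f x₀ = 0 → 0 < f x₀ →
      0 < deriv (deriv f) x₀ := by
    intro x₀ hx₀ hf' hfx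
    have hx0 : (0:ℝ) < x₀ := hx₀.1
    have hU : HasDerivAt (fun y => f y / y)
        ((deriv f x₀ * x₀ - f x₀ * 1) / x₀ ^ 2) x₀ :=
      (hfd x₀).hasDerivAt.div (hasDerivAt_id' x₀) (ne_of_gt hx0)
    have hV : HasDerivAt (fun y => (1 + f y) / (1 + y))
        ((deriv f x₀ * (1 + x₀) - (1 + f x₀) * 1) / (1 + x₀) ^ 2) x₀ := by
      have h1 : HasDerivAt (fun y => 1 + f y) (deriv f x₀) x₀ :=
        (hfd x₀).hasDerivAt.const_add 1
      have h2 : HasDerivAt (fun y : ℝ => 1 + y) 1 x₀ := (hasDerivAt_id' x₀).const_add 1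
      exact h1.div h2 (by positivity)
    obtain ⟨Dk, hDk, hDkneg⟩ := bet_hasDeriv' m n (k'+1) hU hV
    obtain ⟨Dk', hDk', -⟩ := bet_hasDeriv' m n k' hU hV
    have hff : HasDerivAt (deriv f) (deriv (deriv f) x₀) x₀ := (hf2 x₀ hx₀).hasDerivAt
    have hw2 := hDk.fun_add (hff.fun_mul hDk')
    have hev : (fun y => bet m n (k'+1) (f y / y) ((1 + f y)/(1 + y))
          + deriv f y * bet m n k' (f y / y) ((1 + f y)/(1 + y))) =ᶠ[nhds x₀]
        fun _ => α :=
      Filter.eventuallyEq_of_mem (isOpen_Ioo.mem_nhds hx₀) (fun z hz => hw z hz)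
    have hzero : Dk + (deriv (deriv f) x₀ * bet m n k' (f x₀ / x₀) ((1 + f x₀)/(1 + x₀))
        + deriv f x₀ * Dk') = 0 := by
      have h5 := hev.deriv_eq
      rw [hw2.deriv, deriv_const] at h5
      exact h5
    have hux : 0 < f x₀ / x₀ := div_pos hfx hx0
    have hvx : 0 < (1 + f x₀) / (1 + x₀) := div_pos (by linarith) (by linarith)
    have hU' : (deriv f x₀ * x₀ - f x₀ * 1) / x₀ ^ 2 < 0 :=
      div_neg_of_neg_of_pos (by rw [hf']; nlinarith) (by positivity)
    have hV' : (deriv f x₀ * (1 + x₀) - (1 + f x₀) * 1) / (1 + x₀) ^ 2 < 0 :=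
      div_neg_of_neg_of_pos (by rw [hf']; nlinarith) (by positivity)
    have hD : Dk < 0 := hDkneg (by omega) hkn hux hvx hU' hV'
    have hB : 0 < bet m n k' (f x₀ / x₀) ((1 + f x₀)/(1 + x₀)) :=
      bet_pos m n k' (by omega) hux.le hvx
    rw [hf', zero_mul, add_zero] at hzero
    by_contra h
    push_neg at h
    have : deriv (deriv f) x₀ * bet m n k' (f x₀ / x₀) ((1 + f x₀)/(1 + x₀)) ≤ 0 :=
      mul_nonpos_of_nonpos_of_nonneg h hB.le
    linarith
  refine ⟨partA, ?_⟩
  have mono : MonotoneOn f (Set.Icc 0 b') := by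
    apply monotoneOn_of_deriv_nonneg (convex_Icc 0 b') hfd.continuous.continuousOn
    · exact fun x _ => (hfd x).differentiableWithinAt
    · intro x hx
      rw [interior_Icc] at hx
      exact hfmono x (Set.mem_Icc_of_Ioo hx)
  intro a ha c hc hac
  rcases lt_or_ge (f a) (f c) with hlt | hge
  · exact hlt
  exfalso
  have hfeq : ∀ z ∈ Set.Icc a c, f z = f a := by
    intro z hz
    have hz1 : z ∈ Set.Icc 0 b' := ⟨le_trans ha.1 hz.1, le_trans hz.2 hc.2⟩
    have h1 : f a ≤ f z := mono ha hz1 hz.1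
    have h2 : f z ≤ f c := mono hz1 hc hz.2
    linarith
  set z₀ := (a + c)/2 with hz₀def
  have hz₀ : z₀ ∈ Set.Ioo a c := ⟨by simp only [hz₀def]; linarith, by simp only [hz₀def]; linarith⟩
  have hz₀b : z₀ ∈ Set.Ioo (0:ℝ) b' := ⟨lt_of_le_of_lt ha.1 hz₀.1, lt_of_lt_of_le hz₀.2 hc.2⟩
  have hder0 : ∀ z ∈ Set.Ioo a c, deriv f z = 0 := by
    intro z hz
    have hev : f =ᶠ[nhds z] fun _ => f a :=
      Filter.eventuallyEq_of_mem (isOpen_Ioo.mem_nhds hz)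
        (fun y hy => hfeq y (Set.mem_Icc_of_Ioo hy))
    rw [hev.deriv_eq, deriv_const]
  rcases lt_or_ge 0 (f z₀) with hpos | hle
  · have h2z : deriv (deriv f) z₀ = 0 := by
      have hev : deriv f =ᶠ[nhds z₀] fun _ => 0 :=
        Filter.eventuallyEq_of_mem (isOpen_Ioo.mem_nhds hz₀) hder0
      rw [hev.deriv_eq, deriv_const]
    have := partA z₀ hz₀b (hder0 z₀ hz₀) hpos
    rw [h2z] at this
    exact lt_irrefl 0 this
  · have hz₀Icc : z₀ ∈ Set.Icc (0:ℝ) b' := Set.mem_Icc_of_Ioo hz₀b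
    have hfz0 : f z₀ = 0 := le_antisymm hle (hfpos z₀ hz₀Icc)
    have hzf : ∀ y ∈ Set.Icc (0:ℝ) z₀, f y = 0 := by
      intro y hy
      have hyIcc : y ∈ Set.Icc (0:ℝ) b' := ⟨hy.1, le_trans hy.2 hz₀Icc.2⟩
      have h1 : f y ≤ f z₀ := mono hyIcc hz₀Icc hy.2
      have h2 := hfpos y hyIcc
      linarith
    have hzd : ∀ y ∈ Set.Ioo (0:ℝ) z₀, deriv f y = 0 := by
      intro y hy
      have hev : f =ᶠ[nhds y] fun _ => 0 :=
        Filter.eventuallyEq_of_mem (isOpen_Ioo.mem_nhds hy)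
          (fun w hwm => hzf w (Set.mem_Icc_of_Ioo hwm))
      rw [hev.deriv_eq, deriv_const]
    have key : ∀ y ∈ Set.Ioo (0:ℝ) z₀,
        (n.choose (k'+1) : ℝ) * ((1:ℝ)/(1+y))^(k'+1) = α := by
      intro y hy
      have hyb : y ∈ Set.Ioo (0:ℝ) b' := ⟨hy.1, lt_trans hy.2 hz₀b.2⟩
      have h := hw y hyb
      rw [hzf y (Set.mem_Icc_of_Ioo hy), hzd y hy] at h
      rw [zero_div, zero_mul, add_zero, bet_zero_left] at h
      rw [← h]
      norm_num
    have hz₀pos : (0:ℝ) < z₀ := hz₀b.1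
    have hy₁ : z₀/3 ∈ Set.Ioo (0:ℝ) z₀ := ⟨by linarith, by linarith⟩
    have hy₂ : z₀/2 ∈ Set.Ioo (0:ℝ) z₀ := ⟨by linarith, by linarith⟩
    have e₁ := key _ hy₁
    have e₂ := key _ hy₂
    have hlt2 : ((1:ℝ)/(1+z₀/2)) < (1:ℝ)/(1+z₀/3) :=
      one_div_lt_one_div_of_lt (by linarith) (by linarith)
    have hpowlt : ((1:ℝ)/(1+z₀/2))^(k'+1) < ((1:ℝ)/(1+z₀/3))^(k'+1) :=
      pow_lt_pow_left₀ hlt2 (by positivity) (by omega)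
    have hC : 0 < (n.choose (k'+1) : ℝ) := by exact_mod_cast Nat.choose_pos hkn
    nlinarith [hpowlt, hC, e₁, e₂]
end

section
/- Let m, n ≥ 0, 1 ≤ k ≤ n be integers and b, b' > 0. Suppose α < C(n,k), where α = G^{m,n,k}_1(b,b')/G^{m,n}_1(b'). Then there exists a unique triple (α̃, β̃, λ) of reals with λ ∈ (0, b') solving the system: a₀(λ) = α̃ G^{m,n}_1(λ) + β̃, a₀'(λ) = α̃ (G^{m,n}_1)'(λ), and G^{m,n,k}_1(b, b') = α̃ G^{m,n}_1(b') + β̃, where a₀(x) = C(n,k) G^{m,n−k}_1(x). -/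
open Finset Polynomial Set


lemma gmn_hasDerivAt (m l : ℕ) (x : ℝ) :
    HasDerivAt (fun u => Gmn m l 1 u) (x ^ m * (x + 1) ^ l) x := by
  have hc : Continuous (fun s : ℝ => s ^ m * (s + 1) ^ l) := by continuity
  exact (hc.integral_hasStrictDerivAt 0 x).hasDerivAt

lemma gmn_zero (m l : ℕ) : Gmn m l 1 0 = 0 := by
  simp [Gmn]

lemma gmn_lt (m l : ℕ) {x y : ℝ} (hx : 0 ≤ x) (hxy : x < y) :
    Gmn m l 1 x < Gmn m l 1 y := by
  have hc : Continuous (fun s : ℝ => s ^ m * (s + 1) ^ l) := by continuity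
  have h : Gmn m l 1 y - Gmn m l 1 x = ∫ s in x..y, s ^ m * (s + 1) ^ l := by
    unfold Gmn
    rw [intervalIntegral.integral_interval_sub_left (hc.intervalIntegrable _ _)
      (hc.intervalIntegrable _ _)]
  have hpos : 0 < ∫ s in x..y, s ^ m * (s + 1) ^ l := by
    apply intervalIntegral.intervalIntegral_pos_of_pos_on (hc.intervalIntegrable _ _) _ hxy
    intro s hs
    have hs0 : 0 < s := lt_of_le_of_lt hx hs.1
    positivity
  linarith

lemma gmn_pos (m l : ℕ) {y : ℝ} (hy : 0 < y) : 0 < Gmn m l 1 y := by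
  have := gmn_lt m l le_rfl hy
  rwa [gmn_zero] at this

lemma gmn_formula (m n : ℕ) (a x : ℝ) :
    Gmn m n a x = ∑ j ∈ range (n + 1),
      (n.choose j : ℝ) * a ^ (n - j) * (x ^ (m + j + 1) / ((m + j + 1 : ℕ) : ℝ)) := by
  unfold Gmn
  have h : ∀ s : ℝ, s ^ m * (s + a) ^ n
      = ∑ j ∈ range (n + 1), (n.choose j : ℝ) * a ^ (n - j) * s ^ (m + j) := by
    intro s
    rw [add_pow, Finset.mul_sum]
    refine Finset.sum_congr rfl fun j hj => ?_
    rw [pow_add]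
    ring
  simp_rw [h]
  rw [intervalIntegral.integral_finset_sum]
  · refine Finset.sum_congr rfl fun j hj => ?_
    rw [intervalIntegral.integral_const_mul, integral_pow]
    push_cast
    ring
  · intro j hj
    exact (Continuous.intervalIntegrable (by continuity) _ _)

noncomputable def qpoly (m n : ℕ) (b b' : ℝ) : ℝ[X] :=
  ∑ j ∈ range (n + 1),
    Polynomial.C ((n.choose j : ℝ) / ((m + j + 1 : ℕ) : ℝ)) *
      ((1 + X) ^ (n - j) * (Polynomial.C b' + Polynomial.C b * X) ^ (m + j + 1))

lemma qpoly_eval (m n : ℕ) (b b' t : ℝ) :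
    (qpoly m n b b').eval t = Gmn m n (1 + t) (b' + t * b) := by
  rw [gmn_formula, qpoly]
  rw [Polynomial.eval_finset_sum]
  refine Finset.sum_congr rfl fun j hj => ?_
  simp only [eval_mul, eval_pow, eval_add, eval_one, eval_C, eval_X]
  ring

lemma iteratedDeriv_polynomial (k : ℕ) (p : ℝ[X]) :
    iteratedDeriv k (fun x : ℝ => p.eval x) = fun x => (derivative^[k] p).eval x := by
  induction k generalizing p with
  | zero => simp
  | succ k ih =>
    rw [iteratedDeriv_succ']
    have h : (deriv fun x : ℝ => p.eval x) = fun x => p.derivative.eval x :=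
      funext fun x => Polynomial.deriv p
    rw [h, ih, Function.iterate_succ_apply]

lemma gmnk_eq_coeff (m n k : ℕ) (b b' : ℝ) :
    Gmnk m n k b b' = (qpoly m n b b').coeff k := by
  unfold Gmnk
  have h : (fun t : ℝ => Gmn m n (1 + t) (b' + t * b)) = fun t => (qpoly m n b b').eval t :=
    funext fun t => (qpoly_eval m n b b' t).symm
  rw [h, iteratedDeriv_polynomial]
  beta_reduce
  rw [← Polynomial.coeff_zero_eq_eval_zero, Polynomial.coeff_iterate_derivative]
  rw [zero_add, Nat.descFactorial_self, nsmul_eq_mul]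
  rw [← mul_assoc, one_div, inv_mul_cancel₀ (by exact_mod_cast k.factorial_ne_zero), one_mul]

lemma qpoly_coeff (m n k : ℕ) (b b' : ℝ) (hb : b ≠ 0) :
    (qpoly m n b b').coeff k =
      ∑ j ∈ range (n + 1), ((n.choose j : ℝ) / ((m + j + 1 : ℕ) : ℝ)) *
        ∑ i ∈ range (k + 1), ((n - j).choose i : ℝ) *
          (b ^ (m + j + 1) * ((b' / b) ^ (m + j + 1 - (k - i)) *
            (((m + j + 1).choose (k - i)) : ℝ))) := by
  unfold qpoly
  rw [Polynomial.finset_sum_coeff]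
  refine Finset.sum_congr rfl fun j hj => ?_
  rw [Polynomial.coeff_C_mul]
  congr 1
  have hC : Polynomial.C b' + Polynomial.C b * X
      = Polynomial.C b * (X + Polynomial.C (b' / b)) := by
    rw [mul_add, ← Polynomial.C_mul, mul_div_cancel₀ _ hb, add_comm]
  rw [hC, mul_pow, ← map_pow, Polynomial.coeff_mul,
    Finset.Nat.sum_antidiagonal_eq_sum_range_succ_mk]
  refine Finset.sum_congr rfl fun i hi => ?_
  rw [Polynomial.coeff_one_add_X_pow, Polynomial.coeff_C_mul, Polynomial.coeff_X_add_C_pow]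

lemma gmnk_formula (m n k : ℕ) (b b' : ℝ) (hb : b ≠ 0) :
    Gmnk m n k b b' =
      ∑ j ∈ range (n + 1), ((n.choose j : ℝ) / ((m + j + 1 : ℕ) : ℝ)) *
        ∑ i ∈ range (k + 1), ((n - j).choose i : ℝ) *
          (b ^ (m + j + 1) * ((b' / b) ^ (m + j + 1 - (k - i)) *
            (((m + j + 1).choose (k - i)) : ℝ))) := by
  rw [gmnk_eq_coeff, qpoly_coeff m n k b b' hb]

lemma choose_swap {n j k : ℕ} (h : j + k ≤ n) :
    n.choose j * (n - j).choose k = n.choose k * (n - k).choose j := by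
  have h1 := Nat.choose_mul (n := n) (k := j + k) (s := j) (Nat.le_add_right j k)
  have h2 := Nat.choose_mul (n := n) (k := j + k) (s := k) (Nat.le_add_left k j)
  have h3 : (j + k).choose j = (j + k).choose k := by
    rw [← Nat.choose_symm (Nat.le_add_left _ _)]
    congr 1
    omega
  simp only [Nat.add_sub_cancel_left, Nat.add_sub_cancel] at h1 h2
  rw [h3] at h1
  omega

lemma gmnk_lower (m n k : ℕ) (hk : 1 ≤ k) (hkn : k ≤ n) (b b' : ℝ) (hb : 0 < b) (hb' : 0 < b') :
    (n.choose k : ℝ) * Gmn m (n - k) 1 b' < Gmnk m n k b b' := by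
  rw [gmnk_formula m n k b b' hb.ne']
  -- split each inner sum at i = k
  have hsplit : ∀ j ∈ range (n + 1),
      ((n.choose j : ℝ) / ((m + j + 1 : ℕ) : ℝ)) *
        ∑ i ∈ range (k + 1), ((n - j).choose i : ℝ) *
          (b ^ (m + j + 1) * ((b' / b) ^ (m + j + 1 - (k - i)) *
            (((m + j + 1).choose (k - i)) : ℝ)))
      = ((n.choose j : ℝ) / ((m + j + 1 : ℕ) : ℝ)) *
        (∑ i ∈ range k, ((n - j).choose i : ℝ) *
          (b ^ (m + j + 1) * ((b' / b) ^ (m + j + 1 - (k - i)) *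
            (((m + j + 1).choose (k - i)) : ℝ))))
        + (n.choose k : ℝ) * (((n - k).choose j : ℝ) * (b' ^ (m + j + 1) / ((m + j + 1 : ℕ) : ℝ))) := by
    intro j hj
    rw [Finset.sum_range_succ, mul_add]
    congr 1
    -- the i = k term
    rw [Nat.sub_self, Nat.sub_zero, Nat.choose_zero_right]
    have hbb : b ^ (m + j + 1) * ((b' / b) ^ (m + j + 1) * ((1 : ℕ) : ℝ)) = b' ^ (m + j + 1) := by
      rw [Nat.cast_one, mul_one, div_pow, mul_comm, div_mul_cancel₀]
      exact pow_ne_zero _ hb.ne'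
    rw [hbb]
    by_cases hcase : j ≤ n - k
    · have hc := choose_swap (n := n) (j := j) (k := k) (by omega)
      have hc' : (n.choose j : ℝ) * ((n - j).choose k : ℝ)
          = (n.choose k : ℝ) * ((n - k).choose j : ℝ) := by exact_mod_cast hc
      field_simp
      linear_combination hc'
    · have h1 : (n - j).choose k = 0 := Nat.choose_eq_zero_of_lt (by omega)
      have h2 : (n - k).choose j = 0 := Nat.choose_eq_zero_of_lt (by omega)
      rw [h1, h2]
      simp
  rw [Finset.sum_congr rfl hsplit, Finset.sum_add_distrib]
  have hsum2 : ∑ j ∈ range (n + 1),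
      (n.choose k : ℝ) * (((n - k).choose j : ℝ) * (b' ^ (m + j + 1) / ((m + j + 1 : ℕ) : ℝ)))
      = (n.choose k : ℝ) * Gmn m (n - k) 1 b' := by
    rw [gmn_formula, Finset.mul_sum]
    rw [← Finset.sum_subset (Finset.range_subset_range.2 (by omega : n - k + 1 ≤ n + 1))]
    · refine Finset.sum_congr rfl fun j hj => ?_
      simp only [one_pow, one_mul]
      ring
    · intro j hj hj2
      simp only [Finset.mem_range] at hj hj2
      rw [Nat.choose_eq_zero_of_lt (show n - k < j by omega)]
      simp
  rw [hsum2]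
  have hpos : 0 < ∑ j ∈ range (n + 1),
      ((n.choose j : ℝ) / ((m + j + 1 : ℕ) : ℝ)) *
        ∑ i ∈ range k, ((n - j).choose i : ℝ) *
          (b ^ (m + j + 1) * ((b' / b) ^ (m + j + 1 - (k - i)) *
            (((m + j + 1).choose (k - i)) : ℝ))) := by
    have hterm : ∀ j i, (0:ℝ) ≤ ((n - j).choose i : ℝ) *
          (b ^ (m + j + 1) * ((b' / b) ^ (m + j + 1 - (k - i)) *
            (((m + j + 1).choose (k - i)) : ℝ))) := by
      intro j i
      have h1 : (0:ℝ) ≤ b' / b := le_of_lt (div_pos hb' hb)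
      positivity
    have hnn : ∀ j ∈ range (n + 1), (0:ℝ) ≤
        ((n.choose j : ℝ) / ((m + j + 1 : ℕ) : ℝ)) *
        ∑ i ∈ range k, ((n - j).choose i : ℝ) *
          (b ^ (m + j + 1) * ((b' / b) ^ (m + j + 1 - (k - i)) *
            (((m + j + 1).choose (k - i)) : ℝ))) := by
      intro j _
      apply mul_nonneg (by positivity)
      exact Finset.sum_nonneg fun i _ => hterm j i
    have h0mem : 0 ∈ range (n + 1) := Finset.mem_range.2 (by omega)
    refine lt_of_lt_of_le ?_ (Finset.single_le_sum hnn h0mem)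
    refine mul_pos (div_pos ?_ ?_) ?_
    · exact_mod_cast Nat.choose_pos (Nat.zero_le n)
    · exact_mod_cast Nat.succ_pos (m + 0)
    have hk1mem : k - 1 ∈ range k := Finset.mem_range.2 (by omega)
    refine lt_of_lt_of_le ?_ (Finset.single_le_sum (fun i _ => hterm 0 i) hk1mem)
    have e1 : k - (k - 1) = 1 := by omega
    rw [e1]
    have hck : 0 < (n - 0).choose (k - 1) := Nat.choose_pos (by omega)
    have hcm : 0 < (m + 0 + 1).choose 1 := Nat.choose_pos (by omega)
    have h1 : (0:ℝ) < b' / b := div_pos hb' hb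
    have : (0:ℝ) < ((n - 0).choose (k-1) : ℝ) := by exact_mod_cast hck
    have : (0:ℝ) < (((m + 0 + 1).choose 1) : ℝ) := by exact_mod_cast hcm
    positivity
  linarith

/-- if `α < C(n,k)`, there is a unique triple `(α̃, β̃, λ)` with `λ ∈ (0, b')`
solving `a₀(λ) = α̃ G(λ) + β̃`, `a₀'(λ) = α̃ G'(λ)` and `G^{m,n,k}_1(b,b') = α̃ G(b') + β̃`,
where `a₀(x) = C(n,k) G^{m,n−k}_1(x)`. -/
theorem stmt_15 (m n k : ℕ) (hk : 1 ≤ k) (hkn : k ≤ n) (b b' : ℝ) (hb : 0 < b) (hb' : 0 < b')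
    (α : ℝ) (hα : α = Gmnk m n k b b' / Gmn m n 1 b')
    (hsmall : α < (Nat.choose n k : ℝ)) :
    ∃! p : ℝ × ℝ × ℝ,
      p.2.2 ∈ Set.Ioo (0 : ℝ) b' ∧
      (Nat.choose n k : ℝ) * Gmn m (n - k) 1 p.2.2 = p.1 * Gmn m n 1 p.2.2 + p.2.1 ∧
      deriv (fun x => (Nat.choose n k : ℝ) * Gmn m (n - k) 1 x) p.2.2
        = p.1 * deriv (fun x => Gmn m n 1 x) p.2.2 ∧
      Gmnk m n k b b' = p.1 * Gmn m n 1 b' + p.2.1 := by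
  set C : ℝ := (n.choose k : ℝ) with hCdef
  have hC : 0 < C := by
    rw [hCdef]
    exact_mod_cast Nat.choose_pos hkn
  set Γ : ℝ := Gmnk m n k b b' with hΓdef
  set G : ℝ → ℝ := fun x => Gmn m n 1 x with hGdef
  set A : ℝ → ℝ := fun x => C * Gmn m (n - k) 1 x with hAdef
  set F : ℝ → ℝ := fun x => C * (G b' - G x) / (x + 1) ^ k + A x with hFdef
  -- derivative of F
  have hF : ∀ x : ℝ, 0 ≤ x →
      HasDerivAt F (-(C * k * (G b' - G x) * (x + 1) ^ (k - 1)) / ((x + 1) ^ k) ^ 2) x := by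
    intro x hx
    have hx1 : (0:ℝ) < x + 1 := by linarith
    have hGd : HasDerivAt G (x ^ m * (x + 1) ^ n) x := gmn_hasDerivAt m n x
    have hAd : HasDerivAt A (C * (x ^ m * (x + 1) ^ (n - k))) x :=
      (gmn_hasDerivAt m (n - k) x).const_mul C
    have num : HasDerivAt (fun x => C * (G b' - G x)) (C * (0 - x ^ m * (x + 1) ^ n)) x :=
      ((hasDerivAt_const x (G b')).sub hGd).const_mul C
    have den : HasDerivAt (fun x : ℝ => (x + 1) ^ k)
        ((k : ℕ) * (x + 1) ^ (k - 1) * 1) x :=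
      ((hasDerivAt_id x).add_const 1).pow k
    have hD := (num.div den (pow_ne_zero k hx1.ne')).add hAd
    convert hD using 1
    all_goals try rfl
    have hxp : (x + 1 : ℝ) ^ n = (x + 1) ^ (n - k) * (x + 1) ^ k := by
      rw [← pow_add, Nat.sub_add_cancel hkn]
    have hk1 : (x + 1 : ℝ) ^ k = (x + 1) ^ (k - 1) * (x + 1) := by
      rw [← pow_succ]
      congr 1
      omega
    rw [div_add' _ _ _ (pow_ne_zero 2 (pow_ne_zero k hx1.ne')), div_eq_div_iff
      (pow_ne_zero 2 (pow_ne_zero k hx1.ne')) (pow_ne_zero 2 (pow_ne_zero k hx1.ne'))]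
    rw [hxp, hk1]
    ring
  have hcont : ContinuousOn F (Icc 0 b') := fun x hx =>
    ((hF x hx.1).continuousAt).continuousWithinAt
  have hanti : StrictAntiOn F (Icc 0 b') := by
    apply strictAntiOn_of_deriv_neg (convex_Icc 0 b') hcont
    intro x hx
    rw [interior_Icc] at hx
    rw [(hF x hx.1.le).deriv]
    apply div_neg_of_neg_of_pos
    · have hΔ : 0 < G b' - G x := by
        have := gmn_lt m n hx.1.le hx.2
        simp only [hGdef] at *
        linarith
      have hx1 : (0:ℝ) < x + 1 := by linarith [hx.1]
      have hkpos : (0:ℝ) < (k : ℝ) := by exact_mod_cast hk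
      have : 0 < C * k * (G b' - G x) * (x + 1) ^ (k - 1) := by positivity
      linarith
    · have hx1 : (0:ℝ) < x + 1 := by linarith [hx.1]
      positivity
  have hF0 : F 0 = C * G b' := by
    simp only [hFdef, hAdef, hGdef]
    rw [gmn_zero, gmn_zero]
    simp
  have hFb' : F b' = C * Gmn m (n - k) 1 b' := by
    simp only [hFdef, hAdef]
    simp
  have hGpos : 0 < G b' := gmn_pos m n hb'
  have hupper : Γ < C * G b' := by
    rw [hα] at hsmall
    calc Γ = Γ / G b' * G b' := by field_simp
    _ < C * G b' := by
        apply mul_lt_mul_of_pos_right _ hGpos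
        exact hsmall
  have hlower : C * Gmn m (n - k) 1 b' < Γ := gmnk_lower m n k hk hkn b b' hb hb'
  have hmem : Γ ∈ Ioo (F b') (F 0) := by
    rw [hF0, hFb']
    exact ⟨hlower, hupper⟩
  obtain ⟨lam, hlam, hFlam⟩ := intermediate_value_Ioo' hb'.le hcont hmem
  -- the solution
  refine ⟨⟨C / (lam + 1) ^ k, A lam - C / (lam + 1) ^ k * G lam, lam⟩, ⟨hlam, ?_, ?_, ?_⟩, ?_⟩
  · simp only [hAdef]
    ring
  · have hlam1 : (0:ℝ) < lam + 1 := by linarith [hlam.1]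
    rw [(((gmn_hasDerivAt m (n - k) lam)).const_mul C).deriv, (gmn_hasDerivAt m n lam).deriv]
    have hxp : (lam + 1 : ℝ) ^ n = (lam + 1) ^ (n - k) * (lam + 1) ^ k := by
      rw [← pow_add, Nat.sub_add_cancel hkn]
    rw [hxp]
    field_simp
    try ring
  · rw [← hFlam]
    simp only [hFdef]
    ring
  · rintro ⟨a, β, μ⟩ ⟨hμmem, h1q, h2q, h3q⟩
    simp only at hμmem h1q h2q h3q
    have hμ1 : (0:ℝ) < μ + 1 := by linarith [hμmem.1]
    rw [(((gmn_hasDerivAt m (n - k) μ)).const_mul C).deriv, (gmn_hasDerivAt m n μ).deriv] at h2q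
    have hxp : (μ + 1 : ℝ) ^ n = (μ + 1) ^ (n - k) * (μ + 1) ^ k := by
      rw [← pow_add, Nat.sub_add_cancel hkn]
    rw [hxp] at h2q
    have hμm : (0:ℝ) < μ ^ m * (μ + 1) ^ (n - k) := by
      have := hμmem.1
      positivity
    have ha : a = C / (μ + 1) ^ k := by
      have h : C * (μ ^ m * (μ + 1) ^ (n - k)) = a * (μ + 1) ^ k * (μ ^ m * (μ + 1) ^ (n - k)) := by
        rw [h2q]; ring
    -- cancel
      have h2 : C = a * (μ + 1) ^ k := mul_right_cancel₀ hμm.ne' h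
      rw [eq_div_iff (pow_ne_zero k hμ1.ne')]
      linarith
    have hβ0 : β = C * Gmn m (n - k) 1 μ - a * Gmn m n 1 μ := by linarith
    have hFμ : F μ = Γ := by
      simp only [hFdef, hGdef, hAdef]
      rw [h3q, hβ0, ha]
      ring
    have hμlam : μ = lam := by
      apply hanti.injOn (Ioo_subset_Icc_self hμmem) (Ioo_subset_Icc_self hlam)
      rw [hFμ, hFlam]
    subst hμlam
    have hβ : β = A μ - C / (μ + 1) ^ k * G μ := by
      show β = C * Gmn m (n - k) 1 μ - C / (μ + 1) ^ k * Gmn m n 1 μ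
      rw [← ha]
      linarith
    rw [ha, hβ]
end
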